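/- Let A be a contractible Banach algebra, E a unital Banach left A-module, and F a closed submodule of E that is topologically complemented as a Banach subspace. Then F admits a topological complement in E which is also a closed submodule. -/

import Mathlib

set_option maxHeartbeats 1000000


/-- A Banach `A`-bimodule structure on a normed space `E`. -/
structure BanachBimodule (A E : Type) [NonUnitalNormedRing A] [NormedSpace ℂ A]
    [NormedAddCommGroup E] [NormedSpace ℂ E] where
  l : A →L[ℂ] E →L[ℂ] E
  r : A →L[ℂ] E →L[ℂ] E
  l_mul : ∀ a b x, l (a * b) x = l a (l b x)
  r_mul : ∀ a b x, r (a * b) x = r b (r a x)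
  lr_comm : ∀ a b x, l a (r b x) = r b (l a x)

/-- A Banach algebra `A` is contractible if every bounded derivation from `A`
into any Banach `A`-bimodule is inner. -/
def Contractible (A : Type) [NonUnitalNormedRing A] [NormedSpace ℂ A] : Prop :=
  ∀ (E : Type) [NormedAddCommGroup E] [NormedSpace ℂ E] [CompleteSpace E],
    ∀ (B : BanachBimodule A E) (D : A →L[ℂ] E),
      (∀ a b, D (a * b) = B.l a (D b) + B.r b (D a)) →
      ∃ v : E, ∀ a, D a = B.l a v - B.r a v

/-- A unital Banach left `A`-module structure on a normed space `E`. -/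
structure UnitalLeftModule (A E : Type) [NormedRing A] [NormedAlgebra ℂ A]
    [NormedAddCommGroup E] [NormedSpace ℂ E] where
  l : A →L[ℂ] E →L[ℂ] E
  l_mul : ∀ a b x, l (a * b) x = l a (l b x)
  l_one : ∀ x, l 1 x = x

/-- over a contractible Banach algebra, a topologically
complemented closed submodule of a unital Banach left module admits a
topological complement which is itself a closed submodule. -/
theorem complemented_submodule_of_contractible
    (A : Type) [NormedRing A] [NormedAlgebra ℂ A] [CompleteSpace A]
    (hA : Contractible A)
    (E : Type) [NormedAddCommGroup E] [NormedSpace ℂ E] [CompleteSpace E]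
    (L : UnitalLeftModule A E)
    (F : Submodule ℂ E) (hFclosed : IsClosed (F : Set E))
    (hFmod : ∀ c : A, ∀ x ∈ F, L.l c x ∈ F)
    (hcompl : ∃ p : E →L[ℂ] E, (∀ x, p x ∈ F) ∧ ∀ x ∈ F, p x = x) :
    ∃ G : Submodule ℂ E, IsClosed (G : Set E) ∧
      (∀ c : A, ∀ x ∈ G, L.l c x ∈ G) ∧ IsCompl F G := by
  obtain ⟨p, hpF, hpid⟩ := hcompl
  set Λ : A →L[ℂ] E →L[ℂ] E := L.l with hΛdef
  -- The closed subspace N = {T : E →L E | ran T ⊆ F, T|_F = 0}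
  let N : Submodule ℂ (E →L[ℂ] E) :=
    { carrier := {T | (∀ x, T x ∈ F) ∧ ∀ x ∈ F, T x = 0}
      add_mem' := fun hT hS => ⟨fun x => F.add_mem (hT.1 x) (hS.1 x),
        fun x hx => by simp [ContinuousLinearMap.add_apply, hT.2 x hx, hS.2 x hx]⟩
      zero_mem' := ⟨fun _ => F.zero_mem, fun _ _ => rfl⟩
      smul_mem' := fun c T hT => ⟨fun x => F.smul_mem c (hT.1 x),
        fun x hx => by simp [ContinuousLinearMap.smul_apply, hT.2 x hx]⟩ }
  have hNclosed : IsClosed (N : Set (E →L[ℂ] E)) := by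
    have h1 : (N : Set (E →L[ℂ] E)) =
        (⋂ x : E, {T : E →L[ℂ] E | T x ∈ F}) ∩
        (⋂ x : E, ⋂ _ : x ∈ F, {T : E →L[ℂ] E | T x = 0}) := by
      ext T
      simp only [Set.mem_inter_iff, Set.mem_iInter, Set.mem_setOf_eq]
      rfl
    rw [h1]
    refine IsClosed.inter (isClosed_iInter fun x => ?_)
      (isClosed_iInter fun x => isClosed_iInter fun _ => ?_)
    · exact hFclosed.preimage (ContinuousLinearMap.apply ℂ E x).continuous
    · exact isClosed_singleton.preimage (ContinuousLinearMap.apply ℂ E x).continuous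
  haveI : CompleteSpace N := hNclosed.completeSpace_coe
  -- membership facts
  have memN_left : ∀ (a : A) (T : E →L[ℂ] E), T ∈ N → (Λ a).comp T ∈ N := by
    intro a T hT
    exact ⟨fun x => hFmod a _ (hT.1 x),
      fun x hx => by simp [ContinuousLinearMap.comp_apply, hT.2 x hx]⟩
  have memN_right : ∀ (a : A) (T : E →L[ℂ] E), T ∈ N → T.comp (Λ a) ∈ N := by
    intro a T hT
    exact ⟨fun x => hT.1 _, fun x hx => hT.2 _ (hFmod a x hx)⟩
  -- the bimodule actions on N
  let Bl : A →ₗ[ℂ] N →ₗ[ℂ] N := LinearMap.mk₂ ℂ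
    (fun a T => ⟨(Λ a).comp T.1, memN_left a T.1 T.2⟩)
    (fun a b T => by ext x; simp)
    (fun c a T => by ext x; simp)
    (fun a T S => by ext x; simp)
    (fun c a T => by ext x; simp)
  let Br : A →ₗ[ℂ] N →ₗ[ℂ] N := LinearMap.mk₂ ℂ
    (fun a T => ⟨T.1.comp (Λ a), memN_right a T.1 T.2⟩)
    (fun a b T => by ext x; simp)
    (fun c a T => by ext x; simp)
    (fun a T S => by ext x; simp)
    (fun c a T => by ext x; simp)
  have hBl_bound : ∀ (a : A) (T : N), ‖Bl a T‖ ≤ ‖Λ‖ * ‖a‖ * ‖T‖ := by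
    intro a T
    calc ‖(Λ a).comp T.1‖ ≤ ‖Λ a‖ * ‖T.1‖ := ContinuousLinearMap.opNorm_comp_le _ _
      _ ≤ (‖Λ‖ * ‖a‖) * ‖T.1‖ := by
          gcongr; exact Λ.le_opNorm a
  have hBr_bound : ∀ (a : A) (T : N), ‖Br a T‖ ≤ ‖Λ‖ * ‖a‖ * ‖T‖ := by
    intro a T
    calc ‖T.1.comp (Λ a)‖ ≤ ‖T.1‖ * ‖Λ a‖ := ContinuousLinearMap.opNorm_comp_le _ _
      _ ≤ ‖T.1‖ * (‖Λ‖ * ‖a‖) := by gcongr; exact Λ.le_opNorm a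
      _ = ‖Λ‖ * ‖a‖ * ‖T.1‖ := by ring
  let Blc : A →L[ℂ] N →L[ℂ] N := LinearMap.mkContinuous₂ (𝕜 := ℂ) (𝕜₂ := ℂ) (𝕜₃ := ℂ) (E := A) (F := N) (G := N) Bl ‖Λ‖ hBl_bound
  let Brc : A →L[ℂ] N →L[ℂ] N := LinearMap.mkContinuous₂ (𝕜 := ℂ) (𝕜₂ := ℂ) (𝕜₃ := ℂ) (E := A) (F := N) (G := N) Br ‖Λ‖ hBr_bound
  have hBlc : ∀ (a : A) (T : N), ((Blc a T : N) : E →L[ℂ] E) = (Λ a).comp T.1 := fun _ _ => rfl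
  have hBrc : ∀ (a : A) (T : N), ((Brc a T : N) : E →L[ℂ] E) = T.1.comp (Λ a) := fun _ _ => rfl
  let B : BanachBimodule A N :=
    { l := Blc
      r := Brc
      l_mul := by
        intro a b T
        apply Subtype.ext
        ext x
        simp only [hBlc, ContinuousLinearMap.comp_apply]
        exact L.l_mul a b (T.1 x)
      r_mul := by
        intro a b T
        apply Subtype.ext
        ext x
        simp only [hBrc, hBlc, ContinuousLinearMap.comp_apply]
        rw [L.l_mul a b x]
      lr_comm := by
        intro a b T
        apply Subtype.ext
        ext x
        simp only [hBlc, hBrc, ContinuousLinearMap.comp_apply] }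
  -- the derivation a ↦ [Λ a, p]
  have memD : ∀ a : A, (Λ a).comp p - p.comp (Λ a) ∈ N := by
    intro a
    constructor
    · intro x
      exact F.sub_mem (hFmod a _ (hpF x)) (hpF _)
    · intro x hx
      simp only [ContinuousLinearMap.sub_apply, ContinuousLinearMap.comp_apply]
      rw [hpid x hx, hpid _ (hFmod a x hx), sub_self]
  let Dlin : A →ₗ[ℂ] N :=
    { toFun := fun a => ⟨(Λ a).comp p - p.comp (Λ a), memD a⟩
      map_add' := fun a b => by apply Subtype.ext; ext x; simp; abel
      map_smul' := fun c a => by apply Subtype.ext; ext x; simp [smul_sub] }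
  have hD_bound : ∀ a : A, ‖Dlin a‖ ≤ (2 * ‖Λ‖ * ‖p‖) * ‖a‖ := by
    intro a
    have h1 : ‖(Λ a).comp p - p.comp (Λ a)‖ ≤ ‖(Λ a).comp p‖ + ‖p.comp (Λ a)‖ :=
      norm_sub_le _ _
    have h2 : ‖(Λ a).comp p‖ ≤ ‖Λ a‖ * ‖p‖ := ContinuousLinearMap.opNorm_comp_le _ _
    have h3 : ‖p.comp (Λ a)‖ ≤ ‖p‖ * ‖Λ a‖ := ContinuousLinearMap.opNorm_comp_le _ _
    have h4 : ‖Λ a‖ ≤ ‖Λ‖ * ‖a‖ := Λ.le_opNorm a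
    have h5 : (0:ℝ) ≤ ‖p‖ := norm_nonneg _
    have h6 : (0:ℝ) ≤ ‖Λ a‖ := norm_nonneg _
    have : ‖Dlin a‖ = ‖(Λ a).comp p - p.comp (Λ a)‖ := rfl
    rw [this]
    nlinarith
  let D : A →L[ℂ] N := Dlin.mkContinuous (2 * ‖Λ‖ * ‖p‖) hD_bound
  have hleib : ∀ a b, D (a * b) = B.l a (D b) + B.r b (D a) := by
    intro a b
    apply Subtype.ext
    ext x
    show ((Λ (a*b)).comp p - p.comp (Λ (a*b))) x
      = ((Λ a).comp ((Λ b).comp p - p.comp (Λ b))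
        + ((Λ a).comp p - p.comp (Λ a)).comp (Λ b)) x
    simp only [ContinuousLinearMap.sub_apply, ContinuousLinearMap.add_apply,
      ContinuousLinearMap.comp_apply, map_sub]
    rw [L.l_mul a b (p x), L.l_mul a b x]
    abel
  obtain ⟨v, hv⟩ := hA N B D hleib
  -- the corrected projection
  let q : E →L[ℂ] E := p - v.1
  have hveq : ∀ a : A, (Λ a).comp p - p.comp (Λ a) = (Λ a).comp v.1 - v.1.comp (Λ a) := by
    intro a
    have := congrArg (Subtype.val) (hv a)
    exact this
  have hq_comm : ∀ (a : A) (x : E), Λ a (q x) = q (Λ a x) := by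
    intro a x
    have h := congrFun (congrArg DFunLike.coe (hveq a)) x
    simp only [ContinuousLinearMap.sub_apply, ContinuousLinearMap.comp_apply] at h
    have h' : Λ a (p x) - Λ a (v.1 x) = p (Λ a x) - v.1 (Λ a x) :=
      sub_eq_sub_iff_sub_eq_sub.mp h
    simpa only [q, ContinuousLinearMap.sub_apply, map_sub] using h'
  have hqF : ∀ x, q x ∈ F := fun x => F.sub_mem (hpF x) (v.2.1 x)
  have hqid : ∀ x ∈ F, q x = x := by
    intro x hx
    simp only [q, ContinuousLinearMap.sub_apply, hpid x hx, v.2.2 x hx, sub_zero]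
  refine ⟨q.ker, ?_, ?_, ?_⟩
  · exact ContinuousLinearMap.isClosed_ker q
  · intro c x hx
    have hx0 : q x = 0 := hx
    show q (Λ c x) = 0
    rw [← hq_comm c x, hx0, map_zero]
  · rw [isCompl_iff]
    constructor
    · rw [disjoint_iff, Submodule.eq_bot_iff]
      intro x hx
      obtain ⟨hxF, hxK⟩ := Submodule.mem_inf.mp hx
      have : q x = 0 := hxK
      rw [hqid x hxF] at this
      exact this
    · rw [codisjoint_iff, Submodule.eq_top_iff']
      intro x
      rw [Submodule.mem_sup]
      refine ⟨q x, hqF x, x - q x, ?_, by abel⟩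
      show q (x - q x) = 0
      rw [map_sub, hqid (q x) (hqF x), sub_self]
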